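/- Let δ'₁ be the antiderivation of 𝔄(g) with δ'₁B = F, δ'₁β = −ψ, δ'₁(other generators) = 0. Then on the base ℬ(g), the operator δδ'₁ + δ'₁δ equals the degree operator counting total degree in (F, ψ, B, β). -/

import Mathlib

open scoped TensorProduct

noncomputable section

/-- The graded bracket on `g ⊗ Ω` induced by `[X⊗P, Y⊗Q] = ⁅X,Y⁆ ⊗ (P*Q)`. -/
def gaBracket (g : Type) [LieRing g] [LieAlgebra ℂ g] (Ω : Type) [Ring Ω] [Algebra ℂ Ω] :
    (g ⊗[ℂ] Ω) →ₗ[ℂ] (g ⊗[ℂ] Ω) →ₗ[ℂ] (g ⊗[ℂ] Ω) :=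
  TensorProduct.map₂
    (LinearMap.mk₂ ℂ (fun X Y => ⁅X, Y⁆)
      (by intros; simp [add_lie]) (by intros; simp [smul_lie])
      (by intros; simp [lie_add]) (by intros; simp [lie_smul]))
    (LinearMap.mul ℂ Ω)

/-- The submodule of `g ⊗ Ω` of `g`-valued elements with components in a submodule `S` of `Ω`. -/
def gvSub (g : Type) [LieRing g] [LieAlgebra ℂ g] {Ω : Type} [AddCommGroup Ω] [Module ℂ Ω]
    (S : Submodule ℂ Ω) : Submodule ℂ (g ⊗[ℂ] Ω) :=
  LinearMap.range (LinearMap.lTensor g S.subtype)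

/-- A bigraded-commutative algebra structure on `Ω` given by bidegree pieces `gr k l`. -/
def IsBigradedCommAlg (Ω : Type) [Ring Ω] [Algebra ℂ Ω] (gr : ℕ → ℕ → Submodule ℂ Ω) : Prop :=
  (1 : Ω) ∈ gr 0 0 ∧
  (∀ k l m n, ∀ a ∈ gr k l, ∀ b ∈ gr m n, a * b ∈ gr (k + m) (l + n)) ∧
  (∀ k l m n, ∀ a ∈ gr k l, ∀ b ∈ gr m n,
      a * b = ((-1 : ℂ)) ^ ((k + l) * (m + n)) • (b * a)) ∧
  DirectSum.IsInternal (fun p : ℕ × ℕ => gr p.1 p.2)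

/-- An antiderivation with respect to the total degree of a bigrading. -/
def IsAntideriv {Ω : Type} [Ring Ω] [Algebra ℂ Ω] (gr : ℕ → ℕ → Submodule ℂ Ω)
    (R : Ω →ₗ[ℂ] Ω) : Prop :=
  ∀ k l, ∀ a ∈ gr k l, ∀ b, R (a * b) = R a * b + ((-1 : ℂ)) ^ (k + l) • (a * R b)

/-- The bigraded Weil algebra data: a bigraded-commutative differential algebra with
differentials `d`, `δ` of bidegrees `(1,0)`, `(0,1)` and `g`-valued generators
`A, α, F, φ, ψ, ξ, B, β` satisfying the structure equations of Lemma 1.1. -/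
structure BigradedWeil (g : Type) [LieRing g] [LieAlgebra ℂ g]
    (𝔄 : Type) [Ring 𝔄] [Algebra ℂ 𝔄] where
  gr : ℕ → ℕ → Submodule ℂ 𝔄
  graded : IsBigradedCommAlg 𝔄 gr
  d : 𝔄 →ₗ[ℂ] 𝔄
  δ : 𝔄 →ₗ[ℂ] 𝔄
  d_antideriv : IsAntideriv gr d
  δ_antideriv : IsAntideriv gr δ
  d_gr : ∀ k l, ∀ x ∈ gr k l, d x ∈ gr (k + 1) l
  δ_gr : ∀ k l, ∀ x ∈ gr k l, δ x ∈ gr k (l + 1)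
  d_sq : ∀ x, d (d x) = 0
  δ_sq : ∀ x, δ (δ x) = 0
  d_δ : ∀ x, d (δ x) + δ (d x) = 0
  A : g ⊗[ℂ] 𝔄
  α : g ⊗[ℂ] 𝔄
  F : g ⊗[ℂ] 𝔄
  φ : g ⊗[ℂ] 𝔄
  ψ : g ⊗[ℂ] 𝔄
  ξ : g ⊗[ℂ] 𝔄
  B : g ⊗[ℂ] 𝔄
  β : g ⊗[ℂ] 𝔄
  A_mem : A ∈ gvSub g (gr 1 0)
  α_mem : α ∈ gvSub g (gr 0 1)
  F_mem : F ∈ gvSub g (gr 2 0)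
  φ_mem : φ ∈ gvSub g (gr 0 2)
  ψ_mem : ψ ∈ gvSub g (gr 1 1)
  ξ_mem : ξ ∈ gvSub g (gr 1 1)
  B_mem : B ∈ gvSub g (gr 2 1)
  β_mem : β ∈ gvSub g (gr 1 2)
  eqF : F = LinearMap.lTensor g d A + (2⁻¹ : ℂ) • gaBracket g 𝔄 A A
  eqφ : φ = LinearMap.lTensor g δ α + (2⁻¹ : ℂ) • gaBracket g 𝔄 α α
  eqψ : ψ = LinearMap.lTensor g δ A + LinearMap.lTensor g d α + gaBracket g 𝔄 A α
  eqξ : ξ = LinearMap.lTensor g δ A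
  eqB : B = LinearMap.lTensor g δ F + gaBracket g 𝔄 α F
  eqβ : β = LinearMap.lTensor g d φ + gaBracket g 𝔄 A φ

/-- The universal property expressing that the bigraded-commutative algebra `𝔄` is free on
the given list of `g`-valued generators with the given bidegrees. -/
def FreeOn (g : Type) [LieRing g] [LieAlgebra ℂ g] {𝔄 : Type} [Ring 𝔄] [Algebra ℂ 𝔄]
    (gr : ℕ → ℕ → Submodule ℂ 𝔄) {m : ℕ} (gens : Fin m → (ℕ × ℕ) × (g ⊗[ℂ] 𝔄)) : Prop :=
  ∀ (Ω : Type) [Ring Ω] [Algebra ℂ Ω] (grΩ : ℕ → ℕ → Submodule ℂ Ω),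
    IsBigradedCommAlg Ω grΩ →
    ∀ v : Fin m → g ⊗[ℂ] Ω,
      (∀ j, v j ∈ gvSub g (grΩ (gens j).1.1 (gens j).1.2)) →
      ∃! h : 𝔄 →ₐ[ℂ] Ω,
        (∀ k l, ∀ x ∈ gr k l, h x ∈ grΩ k l) ∧
        ∀ j, LinearMap.lTensor g h.toLinearMap (gens j).2 = v j

/-- The list of generators of the bigraded Weil algebra with their bidegrees. -/
def BigradedWeil.gens {g : Type} [LieRing g] [LieAlgebra ℂ g] {𝔄 : Type} [Ring 𝔄]
    [Algebra ℂ 𝔄] (W : BigradedWeil g 𝔄) : Fin 8 → (ℕ × ℕ) × (g ⊗[ℂ] 𝔄) :=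
  ![((1, 0), W.A), ((0, 1), W.α), ((2, 0), W.F), ((0, 2), W.φ),
    ((1, 1), W.ψ), ((1, 1), W.ξ), ((2, 1), W.B), ((1, 2), W.β)]

/-- The `i`-th component in `𝔄` of a `g`-valued element of `g ⊗ 𝔄`, w.r.t. a basis of `g`. -/
def coordEv {g : Type} [LieRing g] [LieAlgebra ℂ g] {ι : Type} (b : Module.Basis ι ℂ g)
    {𝔄 : Type} [Ring 𝔄] [Algebra ℂ 𝔄] (i : ι) : g ⊗[ℂ] 𝔄 →ₗ[ℂ] 𝔄 :=
  (TensorProduct.lid ℂ 𝔄).toLinearMap ∘ₗ LinearMap.rTensor 𝔄 (b.coord i)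

/-- Evaluation of a multilinear form `I` on `g` on `g`-valued elements `Z j ∈ g ⊗ 𝔄`,
multiplying the `𝔄`-components in order. -/
def multiEval {g : Type} [LieRing g] [LieAlgebra ℂ g] {ι : Type} [Fintype ι]
    (b : Module.Basis ι ℂ g) {𝔄 : Type} [Ring 𝔄] [Algebra ℂ 𝔄] {n : ℕ}
    (I : MultilinearMap ℂ (fun _ : Fin n => g) ℂ) (Z : Fin n → g ⊗[ℂ] 𝔄) : 𝔄 :=
  ∑ iv : Fin n → ι, I (fun j => b (iv j)) • (List.ofFn fun j => coordEv b (iv j) (Z j)).prod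

/-- `ad`-invariance of a multilinear form on `g`. -/
def IsInvForm {g : Type} [LieRing g] [LieAlgebra ℂ g] {n : ℕ}
    (I : MultilinearMap ℂ (fun _ : Fin n => g) ℂ) : Prop :=
  ∀ (X : g) (v : Fin n → g), ∑ j, I (Function.update v j ⁅v j, X⁆) = 0

/-- Symmetry of a multilinear form on `g`. -/
def IsSymForm {g : Type} [LieRing g] [LieAlgebra ℂ g] {n : ℕ}
    (I : MultilinearMap ℂ (fun _ : Fin n => g) ℂ) : Prop :=
  ∀ (σ : Equiv.Perm (Fin n)) (v : Fin n → g), I (fun j => v (σ j)) = I v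

/-- The five `g`-valued elements `F, ψ, φ, B, β` of the bigraded Weil algebra. -/
def BigradedWeil.genOf {g : Type} [LieRing g] [LieAlgebra ℂ g] {𝔄 : Type} [Ring 𝔄]
    [Algebra ℂ 𝔄] (W : BigradedWeil g 𝔄) : Fin 5 → g ⊗[ℂ] 𝔄 :=
  ![W.F, W.ψ, W.φ, W.B, W.β]

/-- The base `ℬ(g) ⊆ 𝔄(g)`: the span of the invariant "polynomials" `𝓘(F,ψ,φ,B,β)`. -/
def baseB {g : Type} [LieRing g] [LieAlgebra ℂ g] {ι : Type} [Fintype ι] (b : Module.Basis ι ℂ g)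
    {𝔄 : Type} [Ring 𝔄] [Algebra ℂ 𝔄] (W : BigradedWeil g 𝔄) : Submodule ℂ 𝔄 :=
  Submodule.span ℂ { x | ∃ (n : ℕ) (I : MultilinearMap ℂ (fun _ : Fin n => g) ℂ)
      (c : Fin n → Fin 5), IsInvForm I ∧ x = multiEval b I (fun j => W.genOf (c j)) }

end

noncomputable section


noncomputable section AuxLemmas
variable {g : Type} [LieRing g] [LieAlgebra ℂ g] {𝔄 : Type} [Ring 𝔄] [Algebra ℂ 𝔄]

lemma gaBracket_tmul (X Y : g) (p q : 𝔄) :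
    gaBracket g 𝔄 (X ⊗ₜ p) (Y ⊗ₜ q) = ⁅X, Y⁆ ⊗ₜ (p * q) := by
  simp [gaBracket, TensorProduct.map₂_apply_tmul]

lemma coordEv_lTensor {ι : Type} (b : Module.Basis ι ℂ g) (i : ι) (L : 𝔄 →ₗ[ℂ] 𝔄) (Z : g ⊗[ℂ] 𝔄) :
    coordEv b i (LinearMap.lTensor g L Z) = L (coordEv b i Z) := by
  induction Z using TensorProduct.induction_on with
  | zero => simp
  | tmul X p => simp [coordEv, TensorProduct.lid_tmul]
  | add x y hx hy => simp [hx, hy]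

lemma coordEv_tmul {ι : Type} (b : Module.Basis ι ℂ g) (i : ι) (X : g) (p : 𝔄) :
    coordEv b i (X ⊗ₜ p) = b.coord i X • p := by
  simp [coordEv, TensorProduct.lid_tmul]

lemma coordEv_mem {ι : Type} (b : Module.Basis ι ℂ g) (i : ι) (S : Submodule ℂ 𝔄)
    {Z : g ⊗[ℂ] 𝔄} (hZ : Z ∈ gvSub g S) : coordEv b i Z ∈ S := by
  obtain ⟨z, rfl⟩ := hZ
  induction z using TensorProduct.induction_on with
  | zero => simp
  | tmul X s => simpa [coordEv_tmul] using S.smul_mem (b.coord i X) s.2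
  | add x y hx hy => simpa using S.add_mem hx hy

lemma gvSub_lTensor {S S' : Submodule ℂ 𝔄} {L : 𝔄 →ₗ[ℂ] 𝔄} (hL : ∀ s ∈ S, L s ∈ S')
    {Z : g ⊗[ℂ] 𝔄} (hZ : Z ∈ gvSub g S) : LinearMap.lTensor g L Z ∈ gvSub g S' := by
  obtain ⟨z, rfl⟩ := hZ
  refine ⟨LinearMap.lTensor g (LinearMap.codRestrict S' (L ∘ₗ S.subtype)
    (fun s => hL s.1 s.2)) z, ?_⟩
  rw [← LinearMap.lTensor_comp_apply, ← LinearMap.lTensor_comp_apply]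
  rfl

lemma gvSub_bracket {S T U : Submodule ℂ 𝔄} (hmul : ∀ p ∈ S, ∀ q ∈ T, p * q ∈ U)
    {Z V : g ⊗[ℂ] 𝔄} (hZ : Z ∈ gvSub g S) (hV : V ∈ gvSub g T) :
    gaBracket g 𝔄 Z V ∈ gvSub g U := by
  obtain ⟨z, rfl⟩ := hZ
  obtain ⟨v, rfl⟩ := hV
  induction z using TensorProduct.induction_on with
  | zero => simp [Submodule.zero_mem]
  | add x y hx hy => simpa using Submodule.add_mem _ hx hy
  | tmul X s =>
    induction v using TensorProduct.induction_on with
    | zero => simp [Submodule.zero_mem]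
    | add x y hx hy => simpa using Submodule.add_mem _ hx hy
    | tmul Y t =>
      refine ⟨⁅X, Y⁆ ⊗ₜ ⟨s.1 * t.1, hmul s.1 s.2 t.1 t.2⟩, ?_⟩
      simp [gaBracket_tmul]

lemma lTensor_bracket_leibniz {S : Submodule ℂ 𝔄} (R : 𝔄 →ₗ[ℂ] 𝔄) (ε : ℂ)
    (hS : ∀ p ∈ S, ∀ q, R (p * q) = R p * q + ε • (p * R q))
    {Z : g ⊗[ℂ] 𝔄} (hZ : Z ∈ gvSub g S) (V : g ⊗[ℂ] 𝔄) :
    LinearMap.lTensor g R (gaBracket g 𝔄 Z V)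
      = gaBracket g 𝔄 (LinearMap.lTensor g R Z) V
        + ε • gaBracket g 𝔄 Z (LinearMap.lTensor g R V) := by
  obtain ⟨z, rfl⟩ := hZ
  induction z using TensorProduct.induction_on with
  | zero => simp
  | add x y hx hy =>
    simp only [map_add, LinearMap.add_apply, smul_add] at hx hy ⊢
    rw [hx, hy]; abel
  | tmul X s =>
    induction V using TensorProduct.induction_on with
    | zero => simp
    | add x y hx hy =>
      simp only [map_add, LinearMap.map_add, smul_add] at hx hy ⊢
      rw [hx, hy]; abel
    | tmul Y q =>
      simp only [LinearMap.lTensor_tmul, Submodule.coe_subtype, gaBracket_tmul]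
      rw [hS s.1 s.2 q]
      simp [TensorProduct.tmul_add, TensorProduct.tmul_smul]

lemma gaBracket_comm {S T : Submodule ℂ 𝔄} (sgn : ℂ)
    (h : ∀ p ∈ S, ∀ q ∈ T, p * q = sgn • (q * p))
    {Z V : g ⊗[ℂ] 𝔄} (hZ : Z ∈ gvSub g S) (hV : V ∈ gvSub g T) :
    gaBracket g 𝔄 Z V = -(sgn • gaBracket g 𝔄 V Z) := by
  obtain ⟨z, rfl⟩ := hZ
  obtain ⟨v, rfl⟩ := hV
  induction z using TensorProduct.induction_on with
  | zero => simp
  | add x y hx hy =>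
    simp only [map_add, LinearMap.add_apply, smul_add, LinearMap.map_add] at hx hy ⊢
    rw [hx, hy]; abel
  | tmul X s =>
    induction v using TensorProduct.induction_on with
    | zero => simp
    | add x y hx hy =>
      simp only [map_add, LinearMap.add_apply, smul_add, LinearMap.map_add] at hx hy ⊢
      rw [hx, hy]; abel
    | tmul Y t =>
      simp only [LinearMap.lTensor_tmul, Submodule.coe_subtype, gaBracket_tmul]
      rw [h s.1 s.2 t.1 t.2, TensorProduct.tmul_smul, ← lie_skew Y X,
        TensorProduct.neg_tmul, smul_neg, neg_neg]

lemma gaBracket_jacobi {S T : Submodule ℂ 𝔄} (sgn : ℂ) (hsgn : sgn * sgn = 1)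
    (h : ∀ p ∈ S, ∀ q ∈ T, p * q = sgn • (q * p))
    {Z V : g ⊗[ℂ] 𝔄} (hZ : Z ∈ gvSub g S) (hV : V ∈ gvSub g T) (U : g ⊗[ℂ] 𝔄) :
    gaBracket g 𝔄 Z (gaBracket g 𝔄 V U)
      = gaBracket g 𝔄 (gaBracket g 𝔄 Z V) U
        + sgn • gaBracket g 𝔄 V (gaBracket g 𝔄 Z U) := by
  obtain ⟨z, rfl⟩ := hZ
  obtain ⟨v, rfl⟩ := hV
  induction z using TensorProduct.induction_on with
  | zero => simp
  | add x y hx hy =>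
    simp only [map_add, LinearMap.add_apply, smul_add, LinearMap.map_add] at hx hy ⊢
    rw [hx, hy]; abel
  | tmul X s =>
    induction v using TensorProduct.induction_on with
    | zero => simp
    | add x y hx hy =>
      simp only [map_add, LinearMap.add_apply, smul_add, LinearMap.map_add] at hx hy ⊢
      rw [hx, hy]; abel
    | tmul Y t =>
      induction U using TensorProduct.induction_on with
      | zero => simp
      | add x y hx hy =>
        simp only [map_add, LinearMap.add_apply, smul_add, LinearMap.map_add] at hx hy ⊢
        rw [hx, hy]; abel
      | tmul W r =>
        simp only [LinearMap.lTensor_tmul, Submodule.coe_subtype, gaBracket_tmul]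
        have key : ((s.1 : 𝔄) * t.1) * r = sgn • (t.1 * (s.1 * r)) := by
          rw [h s.1 s.2 t.1 t.2, smul_mul_assoc, mul_assoc]
        rw [leibniz_lie, TensorProduct.add_tmul, ← mul_assoc, key, TensorProduct.tmul_smul]
        rw [TensorProduct.tmul_smul]


section BW
variable {g : Type} [LieRing g] [LieAlgebra ℂ g] {𝔄 : Type} [Ring 𝔄] [Algebra ℂ 𝔄]
variable (W : BigradedWeil g 𝔄)

lemma lt_lt (L1 L2 : 𝔄 →ₗ[ℂ] 𝔄) (Z : g ⊗[ℂ] 𝔄) :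
    LinearMap.lTensor g L1 (LinearMap.lTensor g L2 Z) = LinearMap.lTensor g (L1 ∘ₗ L2) Z :=
  (LinearMap.lTensor_comp_apply g L1 L2 Z).symm

lemma δδt (Z : g ⊗[ℂ] 𝔄) : LinearMap.lTensor g W.δ (LinearMap.lTensor g W.δ Z) = 0 := by
  rw [lt_lt]
  have h : W.δ ∘ₗ W.δ = 0 := LinearMap.ext W.δ_sq
  rw [h, LinearMap.lTensor_zero, LinearMap.zero_apply]

lemma dδt (Z : g ⊗[ℂ] 𝔄) :
    LinearMap.lTensor g W.d (LinearMap.lTensor g W.δ Z)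
      = - LinearMap.lTensor g W.δ (LinearMap.lTensor g W.d Z) := by
  rw [lt_lt, lt_lt]
  have h : W.d ∘ₗ W.δ = -(W.δ ∘ₗ W.d) := by
    ext x
    exact eq_neg_of_add_eq_zero_left (W.d_δ x)
  rw [h, LinearMap.lTensor_neg, LinearMap.neg_apply]

lemma δdt (Z : g ⊗[ℂ] 𝔄) :
    LinearMap.lTensor g W.δ (LinearMap.lTensor g W.d Z)
      = - LinearMap.lTensor g W.d (LinearMap.lTensor g W.δ Z) := by
  rw [lt_lt, lt_lt]
  have h : W.δ ∘ₗ W.d = -(W.d ∘ₗ W.δ) := by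
    ext x
    exact eq_neg_of_add_eq_zero_left (by simpa [add_comm] using W.d_δ x)
  rw [h, LinearMap.lTensor_neg, LinearMap.neg_apply]

lemma mem_lt_δ {k l : ℕ} {Z : g ⊗[ℂ] 𝔄} (h : Z ∈ gvSub g (W.gr k l)) :
    LinearMap.lTensor g W.δ Z ∈ gvSub g (W.gr k (l + 1)) :=
  gvSub_lTensor (W.δ_gr k l) h

lemma mem_lt_d {k l : ℕ} {Z : g ⊗[ℂ] 𝔄} (h : Z ∈ gvSub g (W.gr k l)) :
    LinearMap.lTensor g W.d Z ∈ gvSub g (W.gr (k + 1) l) :=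
  gvSub_lTensor (W.d_gr k l) h

lemma mem_br {k l m n : ℕ} {Z V : g ⊗[ℂ] 𝔄} (hZ : Z ∈ gvSub g (W.gr k l))
    (hV : V ∈ gvSub g (W.gr m n)) :
    gaBracket g 𝔄 Z V ∈ gvSub g (W.gr (k + m) (l + n)) :=
  gvSub_bracket (fun p hp q hq => W.graded.2.1 k l m n p hp q hq) hZ hV

lemma br_leib (R : 𝔄 →ₗ[ℂ] 𝔄) (hR : IsAntideriv W.gr R) {k l : ℕ} {Z : g ⊗[ℂ] 𝔄}
    (hZ : Z ∈ gvSub g (W.gr k l)) (V : g ⊗[ℂ] 𝔄) :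
    LinearMap.lTensor g R (gaBracket g 𝔄 Z V)
      = gaBracket g 𝔄 (LinearMap.lTensor g R Z) V
        + ((-1 : ℂ)) ^ (k + l) • gaBracket g 𝔄 Z (LinearMap.lTensor g R V) :=
  lTensor_bracket_leibniz R _ (fun p hp q => hR k l p hp q) hZ V

lemma br_comm {k l m n : ℕ} {Z V : g ⊗[ℂ] 𝔄} (hZ : Z ∈ gvSub g (W.gr k l))
    (hV : V ∈ gvSub g (W.gr m n)) :
    gaBracket g 𝔄 Z V = -(((-1 : ℂ)) ^ ((k + l) * (m + n)) • gaBracket g 𝔄 V Z) :=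
  gaBracket_comm _ (fun p hp q hq => W.graded.2.2.1 k l m n p hp q hq) hZ hV

lemma br_jac {k l m n : ℕ} {Z V : g ⊗[ℂ] 𝔄} (hZ : Z ∈ gvSub g (W.gr k l))
    (hV : V ∈ gvSub g (W.gr m n)) (U : g ⊗[ℂ] 𝔄) :
    gaBracket g 𝔄 Z (gaBracket g 𝔄 V U)
      = gaBracket g 𝔄 (gaBracket g 𝔄 Z V) U
        + ((-1 : ℂ)) ^ ((k + l) * (m + n)) • gaBracket g 𝔄 V (gaBracket g 𝔄 Z U) := by
  refine gaBracket_jacobi _ ?_ (fun p hp q hq => W.graded.2.2.1 k l m n p hp q hq) hZ hV U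
  rw [← pow_add, ← two_mul, pow_mul]
  norm_num

end BW
end AuxLemmas


section Dt
variable {g : Type} [LieRing g] [LieAlgebra ℂ g] {𝔄 : Type} [Ring 𝔄] [Algebra ℂ 𝔄]

local notation "LT" => LinearMap.lTensor g
local notation "BR" => gaBracket g 𝔄

lemma Dt_all (W : BigradedWeil g 𝔄)
    (δ₁' : 𝔄 →ₗ[ℂ] 𝔄) (h₁ : IsAntideriv W.gr δ₁')
    (hB : LT δ₁' W.B = W.F)
    (hβ : LT δ₁' W.β = -W.ψ)
    (hA : LT δ₁' W.A = 0) (hα : LT δ₁' W.α = 0)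
    (hF : LT δ₁' W.F = 0) (hφ : LT δ₁' W.φ = 0)
    (hψ : LT δ₁' W.ψ = 0) (hξ : LT δ₁' W.ξ = 0) :
    (LT W.δ (LT δ₁' W.F) + LT δ₁' (LT W.δ W.F) = W.F) ∧
    (LT W.δ (LT δ₁' W.ψ) + LT δ₁' (LT W.δ W.ψ) = W.ψ) ∧
    (LT W.δ (LT δ₁' W.φ) + LT δ₁' (LT W.δ W.φ) = 0) ∧
    (LT W.δ (LT δ₁' W.B) + LT δ₁' (LT W.δ W.B) = W.B) ∧
    (LT W.δ (LT δ₁' W.β) + LT δ₁' (LT W.δ W.β) = W.β) := by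
  -- memberships
  have mδα : LT W.δ W.α ∈ gvSub g (W.gr 0 2) := mem_lt_δ W W.α_mem
  have mdα : LT W.d W.α ∈ gvSub g (W.gr 1 1) := mem_lt_d W W.α_mem
  have mdδα : LT W.d (LT W.δ W.α) ∈ gvSub g (W.gr 1 2) := mem_lt_d W mδα
  -- rearranged structure equations
  have eδA : LT W.δ W.A = W.ξ := W.eqξ.symm
  have eδα : LT W.δ W.α = W.φ - (2⁻¹ : ℂ) • BR W.α W.α := by rw [W.eqφ]; abel
  have edα : LT W.d W.α = W.ψ - W.ξ - BR W.A W.α := by rw [W.eqψ, ← W.eqξ]; abel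
  have edφ : LT W.d W.φ = W.β - BR W.A W.φ := by rw [W.eqβ]; abel
  have eδF : LT W.δ W.F = W.B - BR W.α W.F := by rw [W.eqB]; abel
  -- δ₁' of brackets of generators
  have bαα : LT δ₁' (BR W.α W.α) = 0 := by
    rw [br_leib W δ₁' h₁ W.α_mem, hα]; simp
  have bAα : LT δ₁' (BR W.A W.α) = 0 := by
    rw [br_leib W δ₁' h₁ W.A_mem, hA, hα]; simp
  have bAφ : LT δ₁' (BR W.A W.φ) = 0 := by
    rw [br_leib W δ₁' h₁ W.A_mem, hA, hφ]; simp
  -- δ₁' of derived one-forms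
  have d1 : LT δ₁' (LT W.δ W.α) = 0 := by
    rw [eδα, map_sub, map_smul, hφ, bαα]; simp
  have d2 : LT δ₁' (LT W.δ W.A) = 0 := by rw [eδA, hξ]
  have d3 : LT δ₁' (LT W.d W.α) = 0 := by
    rw [edα, map_sub, map_sub, hψ, hξ, bAα]; simp
  have d4 : LT δ₁' (LT W.d W.φ) = -W.ψ := by
    rw [edφ, map_sub, hβ, bAφ]; simp
  have d5 : LT δ₁' (LT W.δ W.F) = W.F := by
    have bαF : LT δ₁' (BR W.α W.F) = 0 := by
      rw [br_leib W δ₁' h₁ W.α_mem, hα, hF]; simp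
    rw [eδF, map_sub, hB, bαF]; simp
  -- δ of generators
  have fδφ : LT W.δ W.φ = BR (LT W.δ W.α) W.α := by
    have hc : BR W.α (LT W.δ W.α)
        = -(((-1 : ℂ)) ^ ((0 + 1) * (0 + 2)) • BR (LT W.δ W.α) W.α) :=
      br_comm W W.α_mem mδα
    rw [W.eqφ, map_add, map_smul, δδt, br_leib W W.δ W.δ_antideriv W.α_mem, hc]
    norm_num
    module
  have fdδα : LT W.d (LT W.δ W.α) = LT W.d W.φ - BR (LT W.d W.α) W.α := by
    have hc : BR W.α (LT W.d W.α)
        = -(((-1 : ℂ)) ^ ((0 + 1) * (1 + 1)) • BR (LT W.d W.α) W.α) :=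
      br_comm W W.α_mem mdα
    rw [eδα, map_sub, map_smul, br_leib W W.d W.d_antideriv W.α_mem, hc]
    norm_num
    module
  have fδψ : LT W.δ W.ψ
      = -(LT W.d W.φ) + BR (LT W.d W.α) W.α + BR W.ξ W.α - BR W.A (LT W.δ W.α) := by
    have h1' : LT W.δ (LT W.d W.α) = -(LT W.d (LT W.δ W.α)) := δdt W W.α
    rw [W.eqψ, map_add, map_add, δδt, h1', fdδα,
      br_leib W W.δ W.δ_antideriv W.A_mem, eδA]
    norm_num
    module
  have fδB : LT W.δ W.B = BR (LT W.δ W.α) W.F - BR W.α (LT W.δ W.F) := by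
    rw [W.eqB, map_add, δδt, br_leib W W.δ W.δ_antideriv W.α_mem]
    norm_num
    module
  have fδβ : LT W.δ W.β
      = -(BR (LT W.d (LT W.δ W.α)) W.α) - BR (LT W.δ W.α) (LT W.d W.α)
        + BR W.ξ W.φ - BR W.A (LT W.δ W.φ) := by
    have h1' : LT W.δ (LT W.d W.φ) = -(LT W.d (LT W.δ W.φ)) := δdt W W.φ
    rw [W.eqβ, map_add, h1', fδφ, br_leib W W.d W.d_antideriv mδα,
      br_leib W W.δ W.δ_antideriv W.A_mem, eδA, ← fδφ]
    norm_num
    module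
  -- δ₁' applied to δ of generators
  have g1 : LT δ₁' (LT W.δ W.φ) = 0 := by
    rw [fδφ, br_leib W δ₁' h₁ mδα, d1, hα]; simp
  have bdαα : LT δ₁' (BR (LT W.d W.α) W.α) = 0 := by
    rw [br_leib W δ₁' h₁ mdα, d3, hα]; simp
  have g2 : LT δ₁' (LT W.δ W.ψ) = W.ψ := by
    have bξα : LT δ₁' (BR W.ξ W.α) = 0 := by
      rw [br_leib W δ₁' h₁ W.ξ_mem, hξ, hα]; simp
    have bAδα : LT δ₁' (BR W.A (LT W.δ W.α)) = 0 := by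
      rw [br_leib W δ₁' h₁ W.A_mem, hA, d1]; simp
    rw [fδψ, map_sub, map_add, map_add, map_neg, d4, bdαα, bξα, bAδα]; simp
  have g4 : LT δ₁' (LT W.δ W.B) = BR W.α W.F := by
    have t1 : LT δ₁' (BR (LT W.δ W.α) W.F) = 0 := by
      rw [br_leib W δ₁' h₁ mδα, d1, hF]; simp
    have t2 : LT δ₁' (BR W.α (LT W.δ W.F)) = -(BR W.α W.F) := by
      rw [br_leib W δ₁' h₁ W.α_mem, hα, d5]; norm_num
    rw [fδB, map_sub, t1, t2]; simp
  have g5 : LT δ₁' (LT W.δ W.β) = BR W.ψ W.α := by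
    have d6 : LT δ₁' (LT W.d (LT W.δ W.α)) = -W.ψ := by
      rw [fdδα, map_sub, d4, bdαα]; simp
    have t1 : LT δ₁' (BR (LT W.d (LT W.δ W.α)) W.α) = -(BR W.ψ W.α) := by
      rw [br_leib W δ₁' h₁ mdδα, d6, hα]
      norm_num
    have t2 : LT δ₁' (BR (LT W.δ W.α) (LT W.d W.α)) = 0 := by
      rw [br_leib W δ₁' h₁ mδα, d1, d3]; simp
    have t3 : LT δ₁' (BR W.ξ W.φ) = 0 := by
      rw [br_leib W δ₁' h₁ W.ξ_mem, hξ, hφ]; simp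
    have t4 : LT δ₁' (BR W.A (LT W.δ W.φ)) = 0 := by
      rw [br_leib W δ₁' h₁ W.A_mem, hA, g1]; simp
    rw [fδβ, map_sub, map_add, map_sub, map_neg, t1, t2, t3, t4]; simp
  refine ⟨?_, ?_, ?_, ?_, ?_⟩
  · rw [hF, map_zero, d5]; simp
  · rw [hψ, map_zero, g2]; simp
  · rw [hφ, map_zero, g1]; simp
  · rw [hB, eδF, g4]; abel
  · -- D β = β
    have hJ : BR W.A (BR W.α W.α) = (2 : ℂ) • BR (BR W.A W.α) W.α := by
      have j := br_jac W W.A_mem W.α_mem W.α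
      have hc : BR W.α (BR W.A W.α)
          = -(((-1 : ℂ)) ^ ((0 + 1) * ((1 + 0) + (0 + 1))) • BR (BR W.A W.α) W.α) :=
        br_comm W W.α_mem (mem_br W W.A_mem W.α_mem)
      rw [hc] at j
      rw [j]
      norm_num
      module
    have hψα : BR W.ψ W.α
        = BR W.ξ W.α + BR (LT W.d W.α) W.α + BR (BR W.A W.α) W.α := by
      rw [W.eqψ, ← W.eqξ, map_add, map_add]
      simp
    rw [hβ, map_neg, fδψ, g5, hψα, eδα, W.eqβ]
    simp only [map_sub, map_smul, hJ, map_add, LinearMap.add_apply, LinearMap.sub_apply,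
      LinearMap.smul_apply]
    module

end Dt


section DOp
variable {g : Type} [LieRing g] [LieAlgebra ℂ g] {𝔄 : Type} [Ring 𝔄] [Algebra ℂ 𝔄]

lemma antideriv_one (W : BigradedWeil g 𝔄) {R : 𝔄 →ₗ[ℂ] 𝔄} (hR : IsAntideriv W.gr R) :
    R 1 = 0 := by
  have h := hR 0 0 1 W.graded.1 1
  norm_num at h
  exact h

lemma D_mul (W : BigradedWeil g 𝔄) (δ₁' : 𝔄 →ₗ[ℂ] 𝔄) (h₁ : IsAntideriv W.gr δ₁')
    {k l k' l' : ℕ} {a : 𝔄} (ha : a ∈ W.gr k l) (ha' : δ₁' a ∈ W.gr k' l')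
    (hsg : ((-1 : ℂ)) ^ (k' + l') = -((-1 : ℂ)) ^ (k + l)) (t : 𝔄) :
    W.δ (δ₁' (a * t)) + δ₁' (W.δ (a * t))
      = (W.δ (δ₁' a) + δ₁' (W.δ a)) * t
        + a * (W.δ (δ₁' t) + δ₁' (W.δ t)) := by
  have hδa : W.δ a ∈ W.gr k (l + 1) := W.δ_gr k l a ha
  have hε : ((-1 : ℂ)) ^ (k + (l + 1)) = -((-1 : ℂ)) ^ (k + l) := by
    rw [← add_assoc, pow_succ]; ring
  rw [h₁ k l a ha t, map_add, map_smul, W.δ_antideriv k' l' _ ha' t,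
    W.δ_antideriv k l a ha (δ₁' t), hsg,
    W.δ_antideriv k l a ha t, map_add, map_smul,
    h₁ k (l + 1) _ hδa t, h₁ k l a ha (W.δ t), hε]
  simp only [smul_add, mul_add, add_mul, smul_mul_assoc, mul_smul_comm, smul_smul,
    neg_mul, neg_smul, mul_neg, neg_neg]
  have hsq : ((-1 : ℂ)) ^ (k + l) * ((-1 : ℂ)) ^ (k + l) = 1 := by
    rw [← pow_add, ← two_mul, pow_mul]; norm_num
  rw [hsq]
  simp only [one_smul]
  abel

/-- Good pairs: homogeneous `x` with homogeneous `δ₁' x` of opposite parity, eigenvector. -/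
def GoodPair (W : BigradedWeil g 𝔄) (δ₁' : 𝔄 →ₗ[ℂ] 𝔄) (p : 𝔄 × ℂ) : Prop :=
  (∃ k l k' l' : ℕ, p.1 ∈ W.gr k l ∧ δ₁' p.1 ∈ W.gr k' l' ∧
    ((-1 : ℂ)) ^ (k' + l') = -((-1 : ℂ)) ^ (k + l)) ∧
  W.δ (δ₁' p.1) + δ₁' (W.δ p.1) = p.2 • p.1

lemma D_list_prod (W : BigradedWeil g 𝔄) (δ₁' : 𝔄 →ₗ[ℂ] 𝔄) (h₁ : IsAntideriv W.gr δ₁')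
    (L : List (𝔄 × ℂ)) (hL : ∀ p ∈ L, GoodPair W δ₁' p) :
    W.δ (δ₁' (L.map Prod.fst).prod) + δ₁' (W.δ (L.map Prod.fst).prod)
      = (L.map Prod.snd).sum • (L.map Prod.fst).prod := by
  induction L with
  | nil =>
    simp [antideriv_one W h₁, antideriv_one W W.δ_antideriv]
  | cons p L ih =>
    have hp := hL p List.mem_cons_self
    obtain ⟨⟨k, l, k', l', hm, hm', hsg⟩, heig⟩ := hp
    have ih' := ih (fun q hq => hL q (List.mem_cons_of_mem p hq))
    simp only [List.map_cons, List.prod_cons, List.sum_cons]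
    rw [D_mul W δ₁' h₁ hm hm' hsg, heig, ih', smul_mul_assoc, mul_smul_comm, add_smul]

end DOp


section Final
variable {g : Type} [LieRing g] [LieAlgebra ℂ g] {𝔄 : Type} [Ring 𝔄] [Algebra ℂ 𝔄]

lemma good_gen (W : BigradedWeil g 𝔄) (δ₁' : 𝔄 →ₗ[ℂ] 𝔄) (h₁ : IsAntideriv W.gr δ₁')
    (hB : LinearMap.lTensor g δ₁' W.B = W.F)
    (hβ : LinearMap.lTensor g δ₁' W.β = -W.ψ)
    (hA : LinearMap.lTensor g δ₁' W.A = 0) (hα : LinearMap.lTensor g δ₁' W.α = 0)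
    (hF : LinearMap.lTensor g δ₁' W.F = 0) (hφ : LinearMap.lTensor g δ₁' W.φ = 0)
    (hψ : LinearMap.lTensor g δ₁' W.ψ = 0) (hξ : LinearMap.lTensor g δ₁' W.ξ = 0)
    {ι : Type} (b : Module.Basis ι ℂ g) (i : ι) (m : Fin 5) :
    GoodPair W δ₁' (coordEv b i (W.genOf m), if m = 2 then (0 : ℂ) else 1) := by
  obtain ⟨DF, Dψ, Dφ, DB, Dβ⟩ := Dt_all W δ₁' h₁ hB hβ hA hα hF hφ hψ hξ
  have cc : ∀ (L : 𝔄 →ₗ[ℂ] 𝔄) (Z : g ⊗[ℂ] 𝔄),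
      L (coordEv b i Z) = coordEv b i (LinearMap.lTensor g L Z) :=
    fun L Z => (coordEv_lTensor b i L Z).symm
  fin_cases m
  · -- F
    show GoodPair W δ₁' (coordEv b i W.F, 1)
    refine ⟨⟨2, 0, 2, 1, coordEv_mem b i _ W.F_mem, ?_, by norm_num⟩, ?_⟩
    · rw [cc δ₁' W.F, hF, map_zero]; exact Submodule.zero_mem _
    · rw [cc δ₁' W.F, cc W.δ, cc W.δ W.F, cc δ₁', ← map_add, DF, one_smul]
  · -- ψ
    show GoodPair W δ₁' (coordEv b i W.ψ, 1)
    refine ⟨⟨1, 1, 2, 1, coordEv_mem b i _ W.ψ_mem, ?_, by norm_num⟩, ?_⟩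
    · rw [cc δ₁' W.ψ, hψ, map_zero]; exact Submodule.zero_mem _
    · rw [cc δ₁' W.ψ, cc W.δ, cc W.δ W.ψ, cc δ₁', ← map_add, Dψ, one_smul]
  · -- φ
    show GoodPair W δ₁' (coordEv b i W.φ, 0)
    refine ⟨⟨0, 2, 2, 1, coordEv_mem b i _ W.φ_mem, ?_, by norm_num⟩, ?_⟩
    · rw [cc δ₁' W.φ, hφ, map_zero]; exact Submodule.zero_mem _
    · rw [cc δ₁' W.φ, cc W.δ, cc W.δ W.φ, cc δ₁', ← map_add, Dφ, map_zero, zero_smul]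
  · -- B
    show GoodPair W δ₁' (coordEv b i W.B, 1)
    refine ⟨⟨2, 1, 2, 0, coordEv_mem b i _ W.B_mem, ?_, by norm_num⟩, ?_⟩
    · rw [cc δ₁' W.B, hB]; exact coordEv_mem b i _ W.F_mem
    · rw [cc δ₁' W.B, cc W.δ, cc W.δ W.B, cc δ₁', ← map_add, DB, one_smul]
  · -- β
    show GoodPair W δ₁' (coordEv b i W.β, 1)
    refine ⟨⟨1, 2, 1, 1, coordEv_mem b i _ W.β_mem, ?_, by norm_num⟩, ?_⟩
    · rw [cc δ₁' W.β, hβ, map_neg]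
      exact Submodule.neg_mem _ (coordEv_mem b i _ W.ψ_mem)
    · rw [cc δ₁' W.β, cc W.δ, cc W.δ W.β, cc δ₁', ← map_add, Dβ, one_smul]

end Final

/-- Lemma 2.2, second part: with `δ'₁` the antiderivation with
`δ'₁B = F`, `δ'₁β = −ψ` and zero on the other generators, `δδ'₁ + δ'₁δ` is, on the base
`ℬ(g)`, the degree operator counting the factors from `(F, ψ, B, β)`. -/
theorem stmt_11 (g : Type) [LieRing g] [LieAlgebra ℂ g] [FiniteDimensional ℂ g]
    {ι : Type} [Fintype ι] (b : Module.Basis ι ℂ g)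
    (𝔄 : Type) [Ring 𝔄] [Algebra ℂ 𝔄] (W : BigradedWeil g 𝔄)
    (δ₁' : 𝔄 →ₗ[ℂ] 𝔄) (h₁ : IsAntideriv W.gr δ₁')
    (hB : LinearMap.lTensor g δ₁' W.B = W.F)
    (hβ : LinearMap.lTensor g δ₁' W.β = -W.ψ)
    (hA : LinearMap.lTensor g δ₁' W.A = 0) (hα : LinearMap.lTensor g δ₁' W.α = 0)
    (hF : LinearMap.lTensor g δ₁' W.F = 0) (hφ : LinearMap.lTensor g δ₁' W.φ = 0)
    (hψ : LinearMap.lTensor g δ₁' W.ψ = 0) (hξ : LinearMap.lTensor g δ₁' W.ξ = 0) :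
    ∀ (n : ℕ) (I : MultilinearMap ℂ (fun _ : Fin n => g) ℂ) (c : Fin n → Fin 5),
      IsInvForm I →
      W.δ (δ₁' (multiEval b I fun j => W.genOf (c j)))
          + δ₁' (W.δ (multiEval b I fun j => W.genOf (c j)))
        = (((Finset.univ.filter fun j => c j ≠ 2).card : ℕ) : ℂ) •
            multiEval b I fun j => W.genOf (c j) := by
  intro n I c _
  have key : ∀ iv : Fin n → ι,
      W.δ (δ₁' (List.ofFn fun j => coordEv b (iv j) (W.genOf (c j))).prod)
        + δ₁' (W.δ (List.ofFn fun j => coordEv b (iv j) (W.genOf (c j))).prod)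
      = (((Finset.univ.filter fun j => c j ≠ 2).card : ℕ) : ℂ) •
          (List.ofFn fun j => coordEv b (iv j) (W.genOf (c j))).prod := by
    intro iv
    have hL := D_list_prod W δ₁' h₁
      (List.ofFn fun j => (coordEv b (iv j) (W.genOf (c j)), if c j = 2 then (0 : ℂ) else 1))
      (by
        intro p hp
        rw [List.mem_ofFn] at hp
        obtain ⟨j, rfl⟩ := hp
        exact good_gen W δ₁' h₁ hB hβ hA hα hF hφ hψ hξ b (iv j) (c j))
    simp only [List.map_ofFn, Function.comp_def, List.sum_ofFn] at hL
    have hcard : (∑ j : Fin n, if c j = 2 then (0 : ℂ) else 1)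
        = (((Finset.univ.filter fun j => c j ≠ 2).card : ℕ) : ℂ) := by
      rw [Finset.card_filter]
      push_cast
      exact Finset.sum_congr rfl (fun j _ => by by_cases h : c j = 2 <;> simp [h])
    rw [hcard] at hL
    exact hL
  simp only [multiEval, map_sum, map_smul, Finset.smul_sum]
  rw [← Finset.sum_add_distrib]
  refine Finset.sum_congr rfl (fun iv _ => ?_)
  rw [← smul_add, key iv, smul_comm]


end
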